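/- In 𝔽₂₃, let A₁ = {(a,0,0,0,0) : a ∈ ℝ} ∪ {(at, t, −at²/2, a²t³/6, at³/3) : a ∈ ℝ, t > 0} and let S₁ be the subsemigroup of (ℝ⁵, ∗) generated by A₁. Let δ_r(x) = (r x₁, r x₂, r² x₃, r³ x₄, r³ x₅) for r > 0. Then: (i) S₁ has nonempty topological interior in ℝ⁵; (ii) δ_r(S₁) = S₁ for every r > 0 (S₁ is a cone); and (iii) S₁ is almost regular, i.e. S₁ ⊆ closure(interior(S₁)). -/

import Mathlib

/-- The group operation of the free Carnot group `𝔽₂₃` of rank 2 and step 3, in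
exponential coordinates of the second kind on `ℝ⁵`. -/
noncomputable def F23mul (x y : Fin 5 → ℝ) : Fin 5 → ℝ :=
  ![x 0 + y 0,
    x 1 + y 1,
    x 2 + y 2 - x 0 * y 1,
    x 3 + y 3 - x 0 * y 2 + x 0 ^ 2 * y 1 / 2,
    x 4 + y 4 + x 0 * x 1 * y 1 + x 0 * y 1 ^ 2 / 2 - x 1 * y 2]

/-- The smallest subset of `α` containing `A` and closed under `mul`
(the subsemigroup generated by `A`). -/
def genSemigroup {α : Type*} (mul : α → α → α) (A : Set α) : Set α :=
  ⋂₀ {S : Set α | A ⊆ S ∧ ∀ x ∈ S, ∀ y ∈ S, mul x y ∈ S}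

/-- The exponential image of the closed horizontal half-space with inner normal `X₂`. -/
noncomputable def A1 : Set (Fin 5 → ℝ) :=
  {p | ∃ a : ℝ, p = ![a, 0, 0, 0, 0]} ∪
  {p | ∃ a t : ℝ, 0 < t ∧
    p = ![a * t, t, -(a * t ^ 2) / 2, a ^ 2 * t ^ 3 / 6, a * t ^ 3 / 3]}

/-- The intrinsic dilations of `𝔽₂₃` in exponential coordinates of the second kind. -/
noncomputable def dil (r : ℝ) (x : Fin 5 → ℝ) : Fin 5 → ℝ :=
  ![r * x 0, r * x 1, r ^ 2 * x 2, r ^ 3 * x 3, r ^ 3 * x 4]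

/-! ### Auxiliary definitions -/

noncomputable def Lg (a : ℝ) : Fin 5 → ℝ := ![a, 0, 0, 0, 0]
noncomputable def Eg (t : ℝ) : Fin 5 → ℝ := ![0, t, 0, 0, 0]

noncomputable def invF (p : Fin 5 → ℝ) : Fin 5 → ℝ :=
  ![-p 0, -p 1, -p 2 - p 0 * p 1, -p 3 - p 0 * p 2 - p 0 ^ 2 * p 1 / 2,
    -p 4 - p 0 * p 1 ^ 2 / 2 - p 1 * p 2]

noncomputable def S1 : Set (Fin 5 → ℝ) := genSemigroup F23mul A1

/-! ### Semigroup machinery -/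

lemma A1_sub_S1 : A1 ⊆ S1 := Set.subset_sInter fun _ hT => hT.1

lemma mul_mem_S1 {x y : Fin 5 → ℝ} (hx : x ∈ S1) (hy : y ∈ S1) :
    F23mul x y ∈ S1 :=
  Set.mem_sInter.2 fun T hT =>
    hT.2 x (Set.mem_sInter.1 hx T hT) y (Set.mem_sInter.1 hy T hT)

lemma S1_sub {T : Set (Fin 5 → ℝ)} (h1 : A1 ⊆ T)
    (h2 : ∀ x ∈ T, ∀ y ∈ T, F23mul x y ∈ T) : S1 ⊆ T :=
  Set.sInter_subset_of_mem ⟨h1, h2⟩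

lemma Lg_mem (a : ℝ) : Lg a ∈ S1 := A1_sub_S1 (Or.inl ⟨a, rfl⟩)

lemma Eg_mem {t : ℝ} (ht : 0 < t) : Eg t ∈ S1 :=
  A1_sub_S1 (Or.inr ⟨0, t, ht, by funext i; fin_cases i <;> norm_num [Eg]⟩)

/-! ### Basic algebra -/

lemma dil_hom (r : ℝ) (x y : Fin 5 → ℝ) :
    F23mul (dil r x) (dil r y) = dil r (F23mul x y) := by
  funext i; fin_cases i <;> simp [F23mul, dil] <;> ring

lemma dil_dil (r s : ℝ) (x : Fin 5 → ℝ) : dil r (dil s x) = dil (r * s) x := by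
  funext i; fin_cases i <;> simp [dil] <;> ring

lemma dil_one (x : Fin 5 → ℝ) : dil 1 x = x := by
  funext i; fin_cases i <;> simp [dil]

lemma F23_inv_mul (p y : Fin 5 → ℝ) : F23mul (invF p) (F23mul p y) = y := by
  funext i; fin_cases i <;> simp [F23mul, invF] <;> ring

lemma F23_mul_inv (p y : Fin 5 → ℝ) : F23mul p (F23mul (invF p) y) = y := by
  funext i; fin_cases i <;> simp [F23mul, invF] <;> ring

/-! ### The cone property -/

lemma dil_mem_A1 {r : ℝ} (hr : 0 < r) {x : Fin 5 → ℝ} (hx : x ∈ A1) :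
    dil r x ∈ A1 := by
  rcases hx with ⟨a, rfl⟩ | ⟨a, t, ht, rfl⟩
  · exact Or.inl ⟨r * a, by funext i; fin_cases i <;> simp [dil]⟩
  · exact Or.inr ⟨a, r * t, mul_pos hr ht, by
      funext i; fin_cases i <;> simp [dil] <;> ring⟩

lemma dil_mem_S1 {r : ℝ} (hr : 0 < r) {x : Fin 5 → ℝ} (hx : x ∈ S1) :
    dil r x ∈ S1 := by
  have : S1 ⊆ {y | dil r y ∈ S1} := by
    refine S1_sub (fun a ha => A1_sub_S1 (dil_mem_A1 hr ha)) ?_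
    intro u hu v hv
    show dil r (F23mul u v) ∈ S1
    rw [← dil_hom]
    exact mul_mem_S1 hu hv
  exact this hx

lemma dil_image (r : ℝ) (hr : 0 < r) : dil r '' S1 = S1 := by
  ext y
  constructor
  · rintro ⟨x, hx, rfl⟩; exact dil_mem_S1 hr hx
  · intro hy
    exact ⟨dil r⁻¹ y, dil_mem_S1 (inv_pos.2 hr) hy, by
      rw [dil_dil, mul_inv_cancel₀ hr.ne', dil_one]⟩

/-! ### The key word identity -/

lemma word_eq (x : Fin 5 → ℝ) (b c t1 t4 : ℝ)
    (h1 : b = -(x 2 + x 0 * x 1) - c)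
    (h2 : b ^ 2 + c ^ 2 = 2 * (x 3 + x 0 * x 2 + x 0 ^ 2 * x 1 / 2))
    (h3 : t1 * (x 2 + x 0 * x 1)
      = c - (x 4 - x 0 * x 1 ^ 2 / 2) - (x 2 + x 0 * x 1) / 2)
    (h4 : t4 = x 1 - 2 - t1) :
    F23mul (Lg (x 0)) (F23mul (Eg t1) (F23mul (Lg b) (F23mul (Eg 1)
      (F23mul (Lg (-b)) (F23mul (Lg c) (F23mul (Eg 1)
      (F23mul (Lg (-c)) (Eg t4)))))))) = x := by
  subst h1 h4
  funext i
  fin_cases i <;> simp [F23mul, Lg, Eg]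
  · ring
  · ring
  · linear_combination h2 / 2
  · linear_combination -h3

/-! ### The open set -/

noncomputable def n2f (x : Fin 5 → ℝ) : ℝ := x 2 + x 0 * x 1
noncomputable def n3f (x : Fin 5 → ℝ) : ℝ := x 3 + x 0 * x 2 + x 0 ^ 2 * x 1 / 2
noncomputable def n4f (x : Fin 5 → ℝ) : ℝ := x 4 - x 0 * x 1 ^ 2 / 2
noncomputable def Df (x : Fin 5 → ℝ) : ℝ := 4 * n3f x - n2f x ^ 2
noncomputable def cfn (x : Fin 5 → ℝ) : ℝ := (-n2f x + Real.sqrt (Df x)) / 2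
noncomputable def Nf (x : Fin 5 → ℝ) : ℝ := cfn x - n4f x - n2f x / 2

noncomputable def U : Set (Fin 5 → ℝ) :=
  {x | n2f x < 0 ∧ 0 < Df x ∧ Nf x < 0 ∧ (x 1 - 2) * n2f x < Nf x}

lemma cont_n2f : Continuous n2f := by unfold n2f; fun_prop
lemma cont_n3f : Continuous n3f := by unfold n3f; fun_prop
lemma cont_n4f : Continuous n4f := by unfold n4f; fun_prop
lemma cont_Df : Continuous Df := by unfold Df; exact (continuous_const.mul cont_n3f).sub (cont_n2f.pow 2)
lemma cont_cfn : Continuous cfn := by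
  unfold cfn
  exact ((cont_n2f.neg).add (Real.continuous_sqrt.comp cont_Df)).div_const 2
lemma cont_Nf : Continuous Nf := by
  unfold Nf
  exact (cont_cfn.sub cont_n4f).sub (cont_n2f.div_const 2)

lemma U_open : IsOpen U := by
  unfold U
  exact IsOpen.and (isOpen_lt cont_n2f continuous_const) <| IsOpen.and
    (isOpen_lt continuous_const cont_Df) <| IsOpen.and
    (isOpen_lt cont_Nf continuous_const)
    (isOpen_lt (((continuous_apply 1).sub continuous_const).mul cont_n2f) cont_Nf)

lemma U_sub_S1 : U ⊆ S1 := by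
  rintro x ⟨hn2, hD, hN, hC⟩
  have hn2' : n2f x ≠ 0 := ne_of_lt hn2
  set c : ℝ := cfn x with hc
  set b : ℝ := -n2f x - c with hb
  set t1 : ℝ := Nf x / n2f x with ht1def
  set t4 : ℝ := x 1 - 2 - t1 with ht4def
  have hs : Real.sqrt (Df x) ^ 2 = 4 * n3f x - n2f x ^ 2 := by
    rw [Real.sq_sqrt hD.le]; simp only [Df]
  have h2 : b ^ 2 + c ^ 2 = 2 * (x 3 + x 0 * x 2 + x 0 ^ 2 * x 1 / 2) := by
    rw [hb, hc]
    unfold cfn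
    have hn3 : (2 : ℝ) * (x 3 + x 0 * x 2 + x 0 ^ 2 * x 1 / 2) = 2 * n3f x := by
      unfold n3f; ring
    rw [hn3]
    linear_combination hs / 2
  have h3 : t1 * (x 2 + x 0 * x 1)
      = c - (x 4 - x 0 * x 1 ^ 2 / 2) - (x 2 + x 0 * x 1) / 2 := by
    have : t1 * n2f x = Nf x := div_mul_cancel₀ _ hn2'
    unfold n2f at this
    rw [this]
    unfold Nf n4f n2f
    ring
  have ht1 : 0 < t1 := div_pos_of_neg_of_neg hN hn2
  have ht4 : 0 < t4 := by
    have : t1 < x 1 - 2 := (div_lt_iff_of_neg hn2).2 hC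
    rw [ht4def]; linarith
  have hx : F23mul (Lg (x 0)) (F23mul (Eg t1) (F23mul (Lg b) (F23mul (Eg 1)
      (F23mul (Lg (-b)) (F23mul (Lg c) (F23mul (Eg 1)
      (F23mul (Lg (-c)) (Eg t4)))))))) = x :=
    word_eq x b c t1 t4 (by rw [hb]; unfold n2f; ring) h2 h3 ht4def
  rw [← hx]
  exact mul_mem_S1 (Lg_mem _) <| mul_mem_S1 (Eg_mem ht1) <|
    mul_mem_S1 (Lg_mem _) <| mul_mem_S1 (Eg_mem one_pos) <|
    mul_mem_S1 (Lg_mem _) <| mul_mem_S1 (Lg_mem _) <|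
    mul_mem_S1 (Eg_mem one_pos) <| mul_mem_S1 (Lg_mem _) (Eg_mem ht4)

noncomputable def xstar : Fin 5 → ℝ := ![0, 4, -1, 1/2, 5/2]

lemma xstar_mem_U : xstar ∈ U := by
  have h2 : n2f xstar = -1 := by rw [n2f, show xstar 2 = -1 from rfl]; norm_num [xstar]
  have h3 : n3f xstar = 1/2 := by rw [n3f, show xstar 2 = -1 from rfl, show xstar 3 = 1/2 from rfl]; norm_num [xstar]
  have hD : Df xstar = 1 := by rw [Df, h2, h3]; norm_num
  have hc : cfn xstar = 1 := by rw [cfn, hD, h2]; norm_num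
  have h4 : n4f xstar = 5/2 := by rw [n4f, show xstar 4 = 5/2 from rfl]; norm_num [xstar]
  have hN : Nf xstar = -1 := by rw [Nf, hc, h4, h2]; norm_num
  refine ⟨by rw [h2]; norm_num, by rw [hD]; norm_num, by rw [hN]; norm_num, ?_⟩
  rw [hN, h2]
  norm_num [xstar]

lemma xstar_mem_interior : xstar ∈ interior S1 :=
  mem_interior.2 ⟨U, U_sub_S1, U_open, xstar_mem_U⟩

/-! ### Almost regularity -/

lemma cont_psi (p : Fin 5 → ℝ) (r : ℝ) :
    Continuous fun y : Fin 5 → ℝ => dil r (F23mul (invF p) y) := by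
  refine continuous_pi fun i => ?_
  fin_cases i <;> simp [dil, F23mul, invF] <;> fun_prop

lemma cont_eps (p u : Fin 5 → ℝ) :
    Continuous fun e : ℝ => F23mul p (dil e u) := by
  refine continuous_pi fun i => ?_
  fin_cases i <;> simp [dil, F23mul] <;> fun_prop

lemma translate_dil_interior {p : Fin 5 → ℝ} (hp : p ∈ S1) {e : ℝ}
    (he : 0 < e) : F23mul p (dil e xstar) ∈ interior S1 := by
  set V : Set (Fin 5 → ℝ) := (fun y => dil e⁻¹ (F23mul (invF p) y)) ⁻¹' U with hV
  have hVopen : IsOpen V := U_open.preimage (cont_psi p e⁻¹)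
  have hmem : F23mul p (dil e xstar) ∈ V := by
    show dil e⁻¹ (F23mul (invF p) (F23mul p (dil e xstar))) ∈ U
    rw [F23_inv_mul, dil_dil, inv_mul_cancel₀ he.ne', dil_one]
    exact xstar_mem_U
  have hVsub : V ⊆ S1 := by
    intro y hy
    have hyU : dil e⁻¹ (F23mul (invF p) y) ∈ U := hy
    have : F23mul p (dil e (dil e⁻¹ (F23mul (invF p) y))) = y := by
      rw [dil_dil, mul_inv_cancel₀ he.ne', dil_one, F23_mul_inv]
    rw [← this]
    exact mul_mem_S1 hp (dil_mem_S1 he (U_sub_S1 hyU))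
  exact mem_interior.2 ⟨V, hVsub, hVopen, hmem⟩

lemma S1_almost_regular : S1 ⊆ closure (interior S1) := by
  intro p hp
  have htend : Filter.Tendsto (fun n : ℕ => F23mul p (dil (1 / ((n : ℝ) + 1)) xstar))
      Filter.atTop (nhds p) := by
    have h0 : Filter.Tendsto (fun n : ℕ => 1 / ((n : ℝ) + 1))
        Filter.atTop (nhds 0) := tendsto_one_div_add_atTop_nhds_zero_nat
    have hc := (cont_eps p xstar).tendsto 0
    have := hc.comp h0
    have hid : F23mul p (dil 0 xstar) = p := by
      funext i; fin_cases i <;> simp [F23mul, dil] <;> ring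
    rwa [hid] at this
  refine mem_closure_of_tendsto htend ?_
  filter_upwards with n
  exact translate_dil_interior hp (by positivity)

/-- In `𝔽₂₃`, the semigroup `S₁` generated by the closed horizontal half-space with
inner normal `X₂` has nonempty interior, is a cone (`δ_r(S₁) = S₁` for `r > 0`), and
is almost regular: `S₁ ⊆ closure (interior S₁)`. -/
theorem F23_semigroup_cone_interior_almost_regular :
    (interior (genSemigroup F23mul A1)).Nonempty ∧
    (∀ r : ℝ, 0 < r → dil r '' genSemigroup F23mul A1 = genSemigroup F23mul A1) ∧
    genSemigroup F23mul A1 ⊆ closure (interior (genSemigroup F23mul A1)) :=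
  ⟨⟨xstar, xstar_mem_interior⟩, fun r hr => dil_image r hr, S1_almost_regular⟩
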